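/- Let d ≥ 1 and n ≥ 2, let μ₀ be a probability measure on ℝ with finite moments up to order n that is symmetric, i.e., the pushforward of μ₀ under t ↦ −t equals μ₀. Let μ = μ₀ ⊗ ⋯ ⊗ μ₀ be the d-fold product measure on ℝ^d and let Λ = {q·e_j : 0 ≤ q ≤ n, 1 ≤ j ≤ d}. Suppose t₁, …, t_M ∈ ℝ and real weights w₁, …, w_M satisfy ∑_{m=1}^M w_m t_m^q = ∫ t^q dμ₀(t) for all 0 ≤ q ≤ n. Then for every choice of signs σ = (σ₁, …, σ_d) ∈ {−1, +1}^d, the multivariate rule with nodes y_m = (σ₁ t_m, σ₂ t_m, …, σ_d t_m) and weights w_m satisfies ∑_{m=1}^M w_m p(y_m) = ∫ p(x) dμ(x) for every polynomial p ∈ P_Λ. -/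

import Mathlib

open MeasureTheory

private lemma map_eval_pi' {d : ℕ} (μ₀ : Measure ℝ) [IsProbabilityMeasure μ₀] (j : Fin d) :
    Measure.map (fun x : Fin d → ℝ => x j) (Measure.pi fun _ : Fin d => μ₀) = μ₀ := by
  ext s hs
  rw [Measure.map_apply (measurable_pi_apply j) hs,
    show (fun x : Fin d → ℝ => x j) ⁻¹' s =
      Set.pi Set.univ (Function.update (fun _ => Set.univ) j s) from Set.eval_preimage,
    Measure.pi_pi]
  rw [Finset.prod_eq_single j]
  · simp
  · intro b _ hb; simp [Function.update_of_ne hb]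
  · simp

private lemma odd_moment_zero (μ₀ : Measure ℝ)
    (hsymm : Measure.map (fun s : ℝ => -s) μ₀ = μ₀) {q : ℕ} (hq : Odd q) :
    ∫ s, s ^ q ∂μ₀ = 0 := by
  have hm : Measurable (fun s : ℝ => s ^ q) := measurable_id.pow_const q
  have h : ∫ s, s ^ q ∂μ₀ = ∫ s, (-s) ^ q ∂μ₀ := by
    conv_lhs => rw [← hsymm]
    rw [integral_map measurable_neg.aemeasurable hm.aestronglyMeasurable]
  rw [show (fun s : ℝ => (-s)^q) = fun s : ℝ => -(s^q) by funext s; rw [hq.neg_pow],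
    integral_neg] at h
  linarith

/-- Let `μ₀` be a symmetric probability measure on `ℝ` (pushforward under
`t ↦ -t` equals `μ₀`) with finite moments up to order `n ≥ 2`, `μ = μ₀^⊗d`, and
`Λ = {q·e_j : 0 ≤ q ≤ n, 1 ≤ j ≤ d}`. If `(t_m; w_m)` is exact for `μ₀` on polynomials
of degree at most `n`, then for any signs `σ_j ∈ {−1, +1}` the rule with nodes
`y_m = (σ₁ t_m, …, σ_d t_m)` and weights `w_m` is exact on `P_Λ` for `μ`. -/
theorem signed_diagonal_rule_exact_on_additive_set {d n : ℕ} (hd : 1 ≤ d) (hn : 2 ≤ n)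
    (μ₀ : Measure ℝ) [IsProbabilityMeasure μ₀]
    (hsymm : Measure.map (fun s : ℝ => -s) μ₀ = μ₀)
    (hmom : ∀ q ≤ n, Integrable (fun s : ℝ => s ^ q) μ₀)
    (M : ℕ) (t : Fin M → ℝ) (w : Fin M → ℝ)
    (hquad : ∀ q ≤ n, ∑ m, w m * (t m) ^ q = ∫ s, s ^ q ∂μ₀)
    (σ : Fin d → ℝ) (hσ : ∀ j, σ j = 1 ∨ σ j = -1) :
    ∀ p ∈ Submodule.span ℝ
        ((fun α : Fin d →₀ ℕ => (MvPolynomial.monomial α (1 : ℝ))) ''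
          {α | ∃ q ≤ n, ∃ j : Fin d, α = Finsupp.single j q}),
      ∑ m, w m * MvPolynomial.eval (fun j => σ j * t m) p =
        ∫ x, MvPolynomial.eval x p ∂(Measure.pi fun _ : Fin d => μ₀) := by
  set 𝔪 := Measure.pi (fun _ : Fin d => μ₀) with h𝔪
  intro p hp
  have key : ∀ p ∈ Submodule.span ℝ
      ((fun α : Fin d →₀ ℕ => (MvPolynomial.monomial α (1 : ℝ))) ''
        {α | ∃ q ≤ n, ∃ j : Fin d, α = Finsupp.single j q}),
      Integrable (fun x => MvPolynomial.eval x p) 𝔪 ∧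
      ∑ m, w m * MvPolynomial.eval (fun j => σ j * t m) p =
        ∫ x, MvPolynomial.eval x p ∂𝔪 := by
    intro p hp
    induction hp using Submodule.span_induction with
    | mem p hpmem =>
      obtain ⟨α, ⟨q, hq, j, rfl⟩, rfl⟩ := hpmem
      have heval : ∀ x : Fin d → ℝ,
          MvPolynomial.eval x (MvPolynomial.monomial (Finsupp.single j q) (1 : ℝ)) =
            x j ^ q := by
        intro x
        simp [MvPolynomial.eval_monomial, Finsupp.prod_single_index]
      have hm : Measurable (fun s : ℝ => s ^ q) := measurable_id.pow_const q
      have hint : Integrable (fun x : Fin d → ℝ => (x j) ^ q) 𝔪 := by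
        have := (integrable_map_measure
          (hm.aestronglyMeasurable)
          (measurable_pi_apply j).aemeasurable (μ := 𝔪)).mp
          (by rw [map_eval_pi' μ₀ j]; exact hmom q hq)
        exact this
      have hintval : ∫ x, (x j) ^ q ∂𝔪 = ∫ s, s ^ q ∂μ₀ := by
        rw [← map_eval_pi' (d := d) μ₀ j,
          integral_map (measurable_pi_apply j).aemeasurable hm.aestronglyMeasurable]
      constructor
      · simpa only [heval] using hint
      · simp only [heval, hintval, mul_pow]
        have : ∑ m, w m * (σ j ^ q * t m ^ q) = σ j ^ q * ∑ m, w m * t m ^ q := by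
          rw [Finset.mul_sum]; congr 1; funext m; ring
        rw [this, hquad q hq]
        rcases hσ j with h1 | h1
        · rw [h1, one_pow, one_mul]
        · rcases Nat.even_or_odd q with he | ho
          · rw [h1, he.neg_one_pow, one_mul]
          · rw [odd_moment_zero μ₀ hsymm ho, mul_zero]
    | zero => simp [integrable_zero]
    | add p q _ _ hp hq =>
      obtain ⟨hip, hep⟩ := hp
      obtain ⟨hiq, heq⟩ := hq
      refine ⟨by simp only [map_add]; exact hip.add hiq, ?_⟩
      simp only [map_add]
      rw [integral_add hip hiq, ← hep, ← heq, ← Finset.sum_add_distrib]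
      congr 1; funext m; ring
    | smul c p _ hp =>
      obtain ⟨hip, hep⟩ := hp
      have hsm : ∀ x : Fin d → ℝ, MvPolynomial.eval x (c • p) = c * MvPolynomial.eval x p := by
        intro x; rw [MvPolynomial.smul_eval]
      refine ⟨by simpa only [hsm] using hip.const_mul c, ?_⟩
      simp only [hsm]
      rw [show (fun x => c * MvPolynomial.eval x p) = fun x => c * MvPolynomial.eval x p from rfl,
        integral_const_mul, ← hep, Finset.mul_sum]
      congr 1; funext m; ring
  exact (key p hp).2
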